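/- arXiv:1011.6616 — 2 statements merged into one kernel-verified Lean document; each statement's English description precedes it below -/
import Mathlib

section
/- Let q : ℝ → ℝ be twice continuously differentiable, satisfy the Painlevé II equation q''(s) = s·q(s) + 2·q(s)³ for all s ∈ ℝ, and satisfy the decay bound: there is a constant C with |q(s)| ≤ C·e^{−s} and |q'(s)| ≤ C·e^{−s} for all s ≥ 0. Define F(s) := exp(−∫_s^∞ (x−s)·q(x)² dx), u₀₀(s) := ∫_s^∞ q(x)² dx, q₁ := q' + u₀₀·q, u₁₀(s) := ∫_s^∞ q₁(x)·q(x) dx, q₂(s) := s·q(s) − u₁₀(s)·q(s) + u₀₀(s)·q₁(s), u₂₀(s) := ∫_s^∞ q₂(x)·q(x) dx, and u₂₁(s) := ∫_s^∞ q₂(x)·q₁(x) dx. Then for every s ∈ ℝ, F(s)·(u₁₀(s)·u₂₀(s) − u₀₀(s)·u₂₁(s)) = (1/12)·F''(s) + (s/6)·F'''(s) − (1/24)·F⁽⁵⁾(s). -/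
open MeasureTheory Set Filter Real

set_option maxHeartbeats 1000000

/-- Integrability on `Ioi s` of a continuous function dominated by `D·e^{-x}` for `x ≥ 0`. -/
lemma int_aux {f : ℝ → ℝ} (hf : Continuous f) {D : ℝ}
    (hbd : ∀ x : ℝ, 0 ≤ x → |f x| ≤ D * Real.exp (-x)) (s : ℝ) :
    IntegrableOn f (Set.Ioi s) := by
  have hst : s ≤ max s 0 := le_max_left _ _
  have h1 : IntegrableOn f (Set.Ioc s (max s 0)) :=
    (hf.integrableOn_Icc).mono_set Set.Ioc_subset_Icc_self
  have h2 : IntegrableOn f (Set.Ioi (max s 0)) := by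
    have hexp : IntegrableOn (fun x => D * Real.exp (-x)) (Set.Ioi (max s 0)) := by
      have := (exp_neg_integrableOn_Ioi (max s 0) (one_pos)).const_mul D
      simpa [IntegrableOn] using this
    refine Integrable.mono' hexp (hf.aestronglyMeasurable.restrict) ?_
    filter_upwards [ae_restrict_mem measurableSet_Ioi] with x hx
    have hb := hbd x (le_trans (le_max_right s 0) (le_of_lt hx))
    rwa [Real.norm_eq_abs]
  have := h1.union h2
  rwa [Set.Ioc_union_Ioi_eq_Ioi hst] at this

/-- FTC on `(s,∞)`: if `g' = -f`, `g → 0` at `∞`, `f` integrable, then `∫_{Ioi s} f = g s`. -/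
lemma ftc_aux {f g : ℝ → ℝ} {s : ℝ} (hg : ∀ x, HasDerivAt g (-(f x)) x)
    (hlim : Filter.Tendsto g Filter.atTop (nhds 0)) (hint : IntegrableOn f (Set.Ioi s)) :
    (∫ x in Set.Ioi s, f x) = g s := by
  have h := integral_Ioi_of_hasDerivAt_of_tendsto' (f := g) (f' := fun x => -(f x)) (a := s)
    (fun x _ => hg x) hint.neg hlim
  rw [MeasureTheory.integral_neg] at h
  linarith [h]

/-- Splitting of the improper integral. -/
lemma split_aux {f : ℝ → ℝ}
    (hint : ∀ a : ℝ, IntegrableOn f (Set.Ioi a)) (t : ℝ) :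
    (∫ x in Set.Ioi t, f x) = (∫ x in Set.Ioi (0:ℝ), f x) - ∫ x in (0:ℝ)..t, f x := by
  have key : ∀ a b : ℝ, a ≤ b →
      (∫ x in Set.Ioi a, f x) = (∫ x in Set.Ioc a b, f x) + ∫ x in Set.Ioi b, f x := by
    intro a b hab
    rw [← MeasureTheory.setIntegral_union (Set.Ioc_disjoint_Ioi le_rfl) measurableSet_Ioi
      ((hint a).mono_set Set.Ioc_subset_Ioi_self) (hint b),
      Set.Ioc_union_Ioi_eq_Ioi hab]
  rcases le_total 0 t with h | h
  · have := key 0 t h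
    rw [intervalIntegral.integral_of_le h]
    linarith [this]
  · have := key t 0 h
    rw [intervalIntegral.integral_symm, intervalIntegral.integral_of_le h]
    linarith [this]

/-- Derivative and limit of `K s = ∫_{Ioi s} f`. -/
lemma K_aux {f : ℝ → ℝ} (hf : Continuous f)
    (hint : ∀ a : ℝ, IntegrableOn f (Set.Ioi a)) :
    (∀ s : ℝ, HasDerivAt (fun t => ∫ x in Set.Ioi t, f x) (-(f s)) s) ∧
      Filter.Tendsto (fun t => ∫ x in Set.Ioi t, f x) Filter.atTop (nhds 0) := by
  constructor
  · intro s
    have h1 : HasDerivAt (fun t => ∫ x in (0:ℝ)..t, f x) (f s) s :=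
      intervalIntegral.integral_hasDerivAt_right
        (hf.intervalIntegrable _ _) (hf.stronglyMeasurableAtFilter _ _) hf.continuousAt
    have h2 : HasDerivAt (fun t => (∫ x in Set.Ioi (0:ℝ), f x) - ∫ x in (0:ℝ)..t, f x)
        (-(f s)) s := h1.const_sub _
    exact h2.congr_of_eventuallyEq (Filter.Eventually.of_forall fun t => split_aux hint t)
  · have h1 : Filter.Tendsto (fun t => ∫ x in (0:ℝ)..t, f x) Filter.atTop
        (nhds (∫ x in Set.Ioi (0:ℝ), f x)) :=
      MeasureTheory.intervalIntegral_tendsto_integral_Ioi 0 (hint 0) tendsto_id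
    have h2 := (tendsto_const_nhds (x := (∫ x in Set.Ioi (0:ℝ), f x))
      (f := Filter.atTop (α := ℝ))).sub h1
    rw [sub_self] at h2
    exact h2.congr fun t => (split_aux hint t).symm

/-- The identity `[u₁₀·u₂₀ - u₀₀·u₂₁]·F = (1/12)·F'' + (s/6)·F''' - (1/24)·F⁽⁵⁾`, where
`F(s) = exp(-∫_s^∞ (x-s) q(x)² dx)`, `u₀₀(s) = ∫_s^∞ q(x)² dx`, `q₁ = q' + u₀₀·q`,
`u₁₀(s) = ∫_s^∞ q₁(x) q(x) dx`, `q₂ = s·q - u₁₀·q + u₀₀·q₁`,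
`u₂₀(s) = ∫_s^∞ q₂(x) q(x) dx`, `u₂₁(s) = ∫_s^∞ q₂(x) q₁(x) dx`, and `q` is a
Painlevé II solution with exponential decay at `+∞`. -/
theorem F_C_eq (q F u00 q1 u10 q2 u20 u21 : ℝ → ℝ) (hq : ContDiff ℝ 2 q)
    (hP2 : ∀ s : ℝ, iteratedDeriv 2 q s = s * q s + 2 * q s ^ 3)
    (C : ℝ)
    (hdecay : ∀ s : ℝ, 0 ≤ s →
      |q s| ≤ C * Real.exp (-s) ∧ |deriv q s| ≤ C * Real.exp (-s))
    (hF : ∀ s : ℝ, F s = Real.exp (-(∫ x in Set.Ioi s, (x - s) * q x ^ 2)))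
    (hu00 : ∀ s : ℝ, u00 s = ∫ x in Set.Ioi s, q x ^ 2)
    (hq1 : ∀ s : ℝ, q1 s = deriv q s + u00 s * q s)
    (hu10 : ∀ s : ℝ, u10 s = ∫ x in Set.Ioi s, q1 x * q x)
    (hq2 : ∀ s : ℝ, q2 s = s * q s - u10 s * q s + u00 s * q1 s)
    (hu20 : ∀ s : ℝ, u20 s = ∫ x in Set.Ioi s, q2 x * q x)
    (hu21 : ∀ s : ℝ, u21 s = ∫ x in Set.Ioi s, q2 x * q1 x) :
    ∀ s : ℝ, F s * (u10 s * u20 s - u00 s * u21 s) =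
      (1 / 12) * iteratedDeriv 2 F s + (s / 6) * iteratedDeriv 3 F s
        - (1 / 24) * iteratedDeriv 5 F s := by
  -- derivatives of q
  obtain ⟨p, hp_def⟩ : ∃ t : ℝ → ℝ, t = deriv q := ⟨_, rfl⟩
  rw [← hp_def] at hdecay hq1
  have hqc : Continuous q := hq.continuous
  have hpc : Continuous p := by
    rw [hp_def]; exact hq.continuous_deriv (by norm_num)
  have hqd : ∀ x : ℝ, HasDerivAt q (p x) x := fun x => by
    rw [hp_def]; exact ((hq.differentiable (by norm_num)) x).hasDerivAt
  have hp1 : ContDiff ℝ 1 p := by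
    rw [hp_def]
    rw [show (2 : WithTop ℕ∞) = 1 + 1 from by norm_num] at hq
    exact (contDiff_succ_iff_deriv.mp hq).2.2
  have hpd : ∀ x : ℝ, HasDerivAt p (x * q x + 2 * q x ^ 3) x := by
    intro x
    have h := ((hp1.differentiable one_ne_zero) x).hasDerivAt
    have hd2 : deriv p x = iteratedDeriv 2 q x := by
      rw [hp_def, iteratedDeriv_succ, iteratedDeriv_one]
    rw [hd2, hP2 x] at h
    exact h
  -- closed-form auxiliary functions
  obtain ⟨u, hu_def⟩ : ∃ t : ℝ → ℝ, t = fun x => p x ^ 2 - x * q x ^ 2 - q x ^ 4 := ⟨_, rfl⟩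
  obtain ⟨q1c, hq1c_def⟩ : ∃ t : ℝ → ℝ, t = fun x => p x + u x * q x := ⟨_, rfl⟩
  obtain ⟨v, hv_def⟩ : ∃ t : ℝ → ℝ, t = fun x => (u x ^ 2 - q x ^ 2) / 2 := ⟨_, rfl⟩
  obtain ⟨q2c, hq2c_def⟩ : ∃ t : ℝ → ℝ, t = fun x => x * q x - v x * q x + u x * q1c x := ⟨_, rfl⟩
  obtain ⟨w, hw_def⟩ : ∃ t : ℝ → ℝ, t = fun x =>
    (x * u x - q x * p x) / 3 + u x ^ 3 / 6 - u x * q x ^ 2 / 2 := ⟨_, rfl⟩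
  obtain ⟨z, hz_def⟩ : ∃ t : ℝ → ℝ, t = fun x => -(x * q x ^ 2) / 2 - u x / 2 - u x * q x * p x
    - 3 * q x ^ 4 / 8 + u x ^ 4 / 8 - 3 * (u x ^ 2 * q x ^ 2) / 4 := ⟨_, rfl⟩
  have hud : ∀ x : ℝ, HasDerivAt u (-(q x ^ 2)) x := by
    intro x
    have h := (((hpd x).pow 2).sub
      (((hasDerivAt_id x).mul ((hqd x).pow 2)))).sub ((hqd x).pow 4)
    rw [hu_def]; refine h.congr_deriv ?_
    simp only [Pi.pow_apply, Pi.sub_apply, Pi.mul_apply, Pi.add_apply, Pi.neg_apply, id_eq]; ring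
  have hvd : ∀ x : ℝ, HasDerivAt v (-(q1c x * q x)) x := by
    intro x
    have h := ((((hud x).pow 2).sub ((hqd x).pow 2)).div_const 2)
    rw [hv_def]; refine h.congr_deriv ?_
    simp only [Pi.pow_apply, Pi.sub_apply, Pi.mul_apply, Pi.add_apply, Pi.neg_apply, hq1c_def, hu_def]
    ring
  have hwd : ∀ x : ℝ, HasDerivAt w (-(q2c x * q x)) x := by
    intro x
    have h := (((((hasDerivAt_id x).mul (hud x)).sub
        ((hqd x).mul (hpd x))).div_const 3).add
      (((hud x).pow 3).div_const 6)).sub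
      (((hud x).mul ((hqd x).pow 2)).div_const 2)
    rw [hw_def]; refine h.congr_deriv ?_
    simp only [Pi.pow_apply, Pi.sub_apply, Pi.mul_apply, Pi.add_apply, Pi.neg_apply, hq2c_def, hq1c_def, hv_def, hu_def, id_eq]
    ring
  have hzd : ∀ x : ℝ, HasDerivAt z (-(q2c x * q1c x)) x := by
    intro x
    have h1 := (((hasDerivAt_id x).mul ((hqd x).pow 2)).neg).div_const 2
    have h2 := h1.sub ((hud x).div_const 2)
    have h3 := h2.sub (((hud x).mul (hqd x)).mul (hpd x))
    have h4 := h3.sub ((((hqd x).pow 4).const_mul 3).div_const 8)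
    have h5 := h4.add (((hud x).pow 4).div_const 8)
    have h6 := h5.sub (((((hud x).pow 2).mul ((hqd x).pow 2)).const_mul 3).div_const 4)
    rw [hz_def]; refine h6.congr_deriv ?_
    simp only [Pi.pow_apply, Pi.sub_apply, Pi.mul_apply, Pi.add_apply, Pi.neg_apply, hq2c_def, hq1c_def, hv_def, hu_def, id_eq]
    ring
  -- decay constants and basic exponential facts
  have hC : 0 ≤ C := by
    have h := (hdecay 0 le_rfl).1
    have h2 := abs_nonneg (q 0)
    simp only [neg_zero, Real.exp_zero, mul_one] at h
    linarith
  have hE0 : ∀ x : ℝ, 0 < Real.exp (-x) := fun x => Real.exp_pos _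
  have hE1 : ∀ x : ℝ, 0 ≤ x → Real.exp (-x) ≤ 1 := fun x hx =>
    Real.exp_le_one_iff.mpr (by linarith)
  have hxE : ∀ x : ℝ, 0 ≤ x → x * Real.exp (-x) ≤ 1 := by
    intro x hx
    have h1 : x ≤ Real.exp x := by linarith [Real.add_one_le_exp x]
    rw [Real.exp_neg]
    rw [show x * (Real.exp x)⁻¹ = x / Real.exp x from by ring]
    exact (div_le_one (Real.exp_pos x)).mpr h1
  -- pointwise bounds
  obtain ⟨Mu, hMu_def⟩ : ∃ t : ℝ, t = 2 * C ^ 2 + C ^ 4 := ⟨_, rfl⟩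
  have hMu : 0 ≤ Mu := by rw [hMu_def]; positivity
  obtain ⟨M1, hM1_def⟩ : ∃ t : ℝ, t = C + Mu * C := ⟨_, rfl⟩
  have hM1 : 0 ≤ M1 := by rw [hM1_def]; positivity
  obtain ⟨Mv, hMv_def⟩ : ∃ t : ℝ, t = (Mu ^ 2 + C ^ 2) / 2 := ⟨_, rfl⟩
  have hMv : 0 ≤ Mv := by rw [hMv_def]; positivity
  obtain ⟨A, hA_def⟩ : ∃ t : ℝ, t = Mv * C + Mu * M1 := ⟨_, rfl⟩
  have hA : 0 ≤ A := by rw [hA_def]; positivity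
  have m_u : ∀ x : ℝ, 0 ≤ x → |u x| ≤ Mu * Real.exp (-x) := by
    intro x hx
    rw [hMu_def]
    obtain ⟨e1, e2⟩ := hdecay x hx
    have hq2 : q x ^ 2 ≤ (C * Real.exp (-x)) ^ 2 := by
      rw [← sq_abs]; exact pow_le_pow_left₀ (abs_nonneg _) e1 2
    have hp2 : p x ^ 2 ≤ (C * Real.exp (-x)) ^ 2 := by
      rw [← sq_abs]; exact pow_le_pow_left₀ (abs_nonneg _) e2 2
    have hq4 : q x ^ 4 ≤ (C * Real.exp (-x)) ^ 4 := by
      rw [show q x ^ 4 = |q x| ^ 4 from by rw [← abs_pow]; rw [abs_of_nonneg (by positivity)]]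
      exact pow_le_pow_left₀ (abs_nonneg _) e1 4
    have h1 := hE1 x hx
    have h2 := hxE x hx
    have h0 := (hE0 x).le
    rw [abs_le]
    constructor <;> [skip; skip] <;> simp only [hu_def] <;> nlinarith [sq_nonneg (q x),
      sq_nonneg (p x), pow_nonneg (sq_nonneg (q x)) 2, mul_nonneg hx (sq_nonneg (q x)),
      mul_nonneg (mul_nonneg hx h0) h0, sq_nonneg C,
      mul_le_mul_of_nonneg_right h2 h0, mul_nonneg (sq_nonneg C) h0,
      mul_le_mul_of_nonneg_left h1 (mul_nonneg (sq_nonneg C) h0),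
      mul_le_mul_of_nonneg_left h1 (mul_nonneg (mul_nonneg (sq_nonneg C) (sq_nonneg C)) h0),
      pow_nonneg h0 2, pow_nonneg h0 3, pow_nonneg h0 4]
  have m_q1c : ∀ x : ℝ, 0 ≤ x → |q1c x| ≤ M1 * Real.exp (-x) := by
    intro x hx
    obtain ⟨e1, e2⟩ := hdecay x hx
    have h1 := hE1 x hx
    have h0 := (hE0 x).le
    have hu' := m_u x hx
    calc |q1c x| ≤ |p x| + |u x| * |q x| := by
          rw [hq1c_def]; simpa [abs_mul] using abs_add_le (p x) (u x * q x)
      _ ≤ C * Real.exp (-x) + (Mu * Real.exp (-x)) * (C * Real.exp (-x)) :=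
          add_le_add e2 (mul_le_mul hu' e1 (abs_nonneg _) (mul_nonneg hMu (hE0 x).le))
      _ ≤ M1 * Real.exp (-x) := by rw [hM1_def]; nlinarith [mul_nonneg hMu (mul_nonneg hC h0)]
  have m_v : ∀ x : ℝ, 0 ≤ x → |v x| ≤ Mv * Real.exp (-x) := by
    intro x hx
    obtain ⟨e1, e2⟩ := hdecay x hx
    have h1 := hE1 x hx
    have h0 := (hE0 x).le
    have hu' := m_u x hx
    calc |v x| ≤ (|u x| * |u x| + |q x| * |q x|) / 2 := by
          rw [hv_def]
          have h := abs_sub (u x ^ 2) (q x ^ 2)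
          simp only [abs_div, abs_pow]
          rw [show |(2:ℝ)| = 2 from by norm_num]
          have : |u x ^ 2 - q x ^ 2| ≤ |u x| ^ 2 + |q x| ^ 2 := by
            calc |u x ^ 2 - q x ^ 2| ≤ |u x ^ 2| + |q x ^ 2| := abs_sub _ _
              _ = |u x| ^ 2 + |q x| ^ 2 := by rw [abs_pow, abs_pow]
          calc |u x ^ 2 - q x ^ 2| / 2 ≤ (|u x| ^ 2 + |q x| ^ 2) / 2 := by linarith
            _ = (|u x| * |u x| + |q x| * |q x|) / 2 := by ring
      _ ≤ ((Mu * Real.exp (-x)) * (Mu * Real.exp (-x))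
            + (C * Real.exp (-x)) * (C * Real.exp (-x))) / 2 := by
          have := mul_le_mul hu' hu' (abs_nonneg _) (mul_nonneg hMu (hE0 x).le)
          have := mul_le_mul e1 e1 (abs_nonneg _) (mul_nonneg hC (hE0 x).le)
          linarith
      _ ≤ Mv * Real.exp (-x) := by
          rw [hMv_def]
          nlinarith [mul_nonneg hMu h0, mul_nonneg hC h0, mul_nonneg (mul_nonneg hMu hMu) h0,
            mul_nonneg (mul_nonneg hC hC) h0]
  have m_q2c : ∀ x : ℝ, 0 ≤ x → |q2c x| ≤ (C * x + A) * Real.exp (-x) := by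
    intro x hx
    obtain ⟨e1, e2⟩ := hdecay x hx
    have h1 := hE1 x hx
    have h0 := (hE0 x).le
    have hu' := m_u x hx
    have hv' := m_v x hx
    have hq1' := m_q1c x hx
    calc |q2c x| ≤ |x| * |q x| + |v x| * |q x| + |u x| * |q1c x| := by
          rw [hq2c_def]
          calc |x * q x - v x * q x + u x * q1c x|
              ≤ |x * q x - v x * q x| + |u x * q1c x| := abs_add_le _ _
            _ ≤ |x * q x| + |v x * q x| + |u x * q1c x| := by
                linarith [abs_sub (x * q x) (v x * q x)]
            _ = |x| * |q x| + |v x| * |q x| + |u x| * |q1c x| := by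
                rw [abs_mul, abs_mul, abs_mul]
      _ ≤ x * (C * Real.exp (-x)) + (Mv * Real.exp (-x)) * (C * Real.exp (-x))
            + (Mu * Real.exp (-x)) * (M1 * Real.exp (-x)) := by
          rw [abs_of_nonneg hx]
          have t1 := mul_le_mul_of_nonneg_left e1 hx
          have t2 := mul_le_mul hv' e1 (abs_nonneg _) (mul_nonneg hMv (hE0 x).le)
          have t3 := mul_le_mul hu' hq1' (abs_nonneg _) (mul_nonneg hMu (hE0 x).le)
          linarith
      _ ≤ (C * x + A) * Real.exp (-x) := by
          rw [hA_def]
          nlinarith [mul_nonneg (mul_nonneg hMv hC) h0, mul_nonneg (mul_nonneg hMu hM1) h0]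
  -- continuity
  have hu_c : Continuous u := by rw [hu_def]; fun_prop
  have hq1c_c : Continuous q1c := by rw [hq1c_def]; fun_prop
  have hv_c : Continuous v := by rw [hv_def]; fun_prop
  have hq2c_c : Continuous q2c := by rw [hq2c_def]; fun_prop
  -- integrand bounds
  have b1 : ∀ x : ℝ, 0 ≤ x → |q x ^ 2| ≤ C ^ 2 * Real.exp (-x) := by
    intro x hx
    obtain ⟨e1, _⟩ := hdecay x hx
    have h1 := hE1 x hx
    have h0 := (hE0 x).le
    calc |q x ^ 2| = |q x| ^ 2 := abs_pow _ _
      _ ≤ (C * Real.exp (-x)) ^ 2 := pow_le_pow_left₀ (abs_nonneg _) e1 2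
      _ ≤ C ^ 2 * Real.exp (-x) := by nlinarith [mul_nonneg (mul_nonneg hC hC) h0]
  have b2 : ∀ x : ℝ, 0 ≤ x → |q1c x * q x| ≤ M1 * C * Real.exp (-x) := by
    intro x hx
    obtain ⟨e1, _⟩ := hdecay x hx
    have h1 := hE1 x hx
    have h0 := (hE0 x).le
    calc |q1c x * q x| = |q1c x| * |q x| := abs_mul _ _
      _ ≤ (M1 * Real.exp (-x)) * (C * Real.exp (-x)) :=
          mul_le_mul (m_q1c x hx) e1 (abs_nonneg _) (mul_nonneg hM1 h0)
      _ ≤ M1 * C * Real.exp (-x) := by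
          nlinarith [mul_le_mul_of_nonneg_left h1 (mul_nonneg (mul_nonneg hM1 hC) h0)]
  have b3 : ∀ x : ℝ, 0 ≤ x → |q2c x * q x| ≤ (C + A) * C * Real.exp (-x) := by
    intro x hx
    obtain ⟨e1, _⟩ := hdecay x hx
    have h1 := hE1 x hx
    have h0 := (hE0 x).le
    calc |q2c x * q x| = |q2c x| * |q x| := abs_mul _ _
      _ ≤ ((C * x + A) * Real.exp (-x)) * (C * Real.exp (-x)) :=
          mul_le_mul (m_q2c x hx) e1 (abs_nonneg _)
            (mul_nonneg (add_nonneg (mul_nonneg hC hx) hA) h0)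
      _ ≤ (C + A) * C * Real.exp (-x) := by
          have t1 := mul_le_mul_of_nonneg_left (hxE x hx)
            (mul_nonneg (mul_nonneg hC hC) h0)
          have t2 := mul_le_mul_of_nonneg_left h1 (mul_nonneg (mul_nonneg hA hC) h0)
          nlinarith [t1, t2]
  have b4 : ∀ x : ℝ, 0 ≤ x → |q2c x * q1c x| ≤ (C + A) * M1 * Real.exp (-x) := by
    intro x hx
    have h1 := hE1 x hx
    have h0 := (hE0 x).le
    calc |q2c x * q1c x| = |q2c x| * |q1c x| := abs_mul _ _
      _ ≤ ((C * x + A) * Real.exp (-x)) * (M1 * Real.exp (-x)) :=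
          mul_le_mul (m_q2c x hx) (m_q1c x hx) (abs_nonneg _)
            (mul_nonneg (add_nonneg (mul_nonneg hC hx) hA) h0)
      _ ≤ (C + A) * M1 * Real.exp (-x) := by
          have t1 := mul_le_mul_of_nonneg_left (hxE x hx)
            (mul_nonneg (mul_nonneg hC hM1) h0)
          have t2 := mul_le_mul_of_nonneg_left h1 (mul_nonneg (mul_nonneg hA hM1) h0)
          nlinarith [t1, t2]
  have b6 : ∀ s : ℝ, ∀ x : ℝ, 0 ≤ x →
      |(x - s) * q x ^ 2| ≤ (1 + |s|) * C ^ 2 * Real.exp (-x) := by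
    intro s x hx
    obtain ⟨e1, _⟩ := hdecay x hx
    have h1 := hE1 x hx
    have h0 := (hE0 x).le
    calc |(x - s) * q x ^ 2| = |x - s| * |q x ^ 2| := abs_mul _ _
      _ ≤ (x + |s|) * ((C * Real.exp (-x)) ^ 2) := by
          refine mul_le_mul ?_ ?_ (abs_nonneg _) (by positivity)
          · calc |x - s| ≤ |x| + |s| := abs_sub _ _
              _ = x + |s| := by rw [abs_of_nonneg hx]
          · rw [show |q x ^ 2| = |q x| ^ 2 from abs_pow _ _]
            exact pow_le_pow_left₀ (abs_nonneg _) e1 2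
      _ ≤ (1 + |s|) * C ^ 2 * Real.exp (-x) := by
          have t1 := mul_le_mul_of_nonneg_left (hxE x hx)
            (mul_nonneg (mul_nonneg hC hC) h0)
          have t2 := mul_le_mul_of_nonneg_left h1
            (mul_nonneg (mul_nonneg (abs_nonneg s) (mul_nonneg hC hC)) h0)
          nlinarith [t1, t2]
  -- integrability
  have int1 : ∀ a : ℝ, IntegrableOn (fun x => q x ^ 2) (Set.Ioi a) :=
    fun a => int_aux (by fun_prop) b1 a
  have int2 : ∀ a : ℝ, IntegrableOn (fun x => q1c x * q x) (Set.Ioi a) :=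
    fun a => int_aux (by fun_prop) b2 a
  have int3 : ∀ a : ℝ, IntegrableOn (fun x => q2c x * q x) (Set.Ioi a) :=
    fun a => int_aux (by fun_prop) b3 a
  have int4 : ∀ a : ℝ, IntegrableOn (fun x => q2c x * q1c x) (Set.Ioi a) :=
    fun a => int_aux (by fun_prop) b4 a
  have int5 : ∀ a : ℝ, IntegrableOn u (Set.Ioi a) :=
    fun a => int_aux hu_c m_u a
  have int6 : ∀ s : ℝ, IntegrableOn (fun x => (x - s) * q x ^ 2) (Set.Ioi s) :=
    fun s => int_aux (by fun_prop) (b6 s) s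
  -- limits at infinity
  have tE : Filter.Tendsto (fun x => Real.exp (-x)) Filter.atTop (nhds 0) :=
    Real.tendsto_exp_neg_atTop_nhds_zero
  have txE : Filter.Tendsto (fun x => x * Real.exp (-x)) Filter.atTop (nhds 0) := by
    simpa using Real.tendsto_pow_mul_exp_neg_atTop_nhds_zero 1
  have tq : Filter.Tendsto q Filter.atTop (nhds 0) := by
    refine squeeze_zero_norm' ?_ (by simpa using tE.const_mul C)
    filter_upwards [eventually_ge_atTop (0:ℝ)] with x hx
    rw [Real.norm_eq_abs]
    exact (hdecay x hx).1
  have tp : Filter.Tendsto p Filter.atTop (nhds 0) := by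
    refine squeeze_zero_norm' ?_ (by simpa using tE.const_mul C)
    filter_upwards [eventually_ge_atTop (0:ℝ)] with x hx
    rw [Real.norm_eq_abs]
    exact (hdecay x hx).2
  have txq : Filter.Tendsto (fun x => x * q x) Filter.atTop (nhds 0) := by
    refine squeeze_zero_norm' ?_ (by simpa using txE.const_mul C)
    filter_upwards [eventually_ge_atTop (0:ℝ)] with x hx
    rw [Real.norm_eq_abs, abs_mul, abs_of_nonneg hx]
    calc x * |q x| ≤ x * (C * Real.exp (-x)) :=
          mul_le_mul_of_nonneg_left (hdecay x hx).1 hx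
      _ = C * (x * Real.exp (-x)) := by ring
  have txp : Filter.Tendsto (fun x => x * p x) Filter.atTop (nhds 0) := by
    refine squeeze_zero_norm' ?_ (by simpa using txE.const_mul C)
    filter_upwards [eventually_ge_atTop (0:ℝ)] with x hx
    rw [Real.norm_eq_abs, abs_mul, abs_of_nonneg hx]
    calc x * |p x| ≤ x * (C * Real.exp (-x)) :=
          mul_le_mul_of_nonneg_left (hdecay x hx).2 hx
      _ = C * (x * Real.exp (-x)) := by ring
  have tu : Filter.Tendsto u Filter.atTop (nhds 0) := by
    have h := ((tp.mul tp).sub (txq.mul tq)).sub ((tq.mul tq).mul (tq.mul tq))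
    norm_num at h
    exact h.congr fun x => by rw [hu_def]; ring
  have txu : Filter.Tendsto (fun x => x * u x) Filter.atTop (nhds 0) := by
    have h := ((txp.mul tp).sub (txq.mul txq)).sub
      ((txq.mul tq).mul (tq.mul tq))
    norm_num at h
    exact h.congr fun x => by rw [hu_def]; ring
  have tq1c : Filter.Tendsto q1c Filter.atTop (nhds 0) := by
    have h := tp.add (tu.mul tq)
    norm_num at h
    exact h.congr fun x => by rw [hq1c_def]
  have tv : Filter.Tendsto v Filter.atTop (nhds 0) := by
    have h := ((tu.mul tu).sub (tq.mul tq)).div_const 2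
    norm_num at h
    exact h.congr fun x => by rw [hv_def]; ring
  have tw : Filter.Tendsto w Filter.atTop (nhds 0) := by
    have h := (((txu.sub (tq.mul tp)).div_const 3).add
      (((tu.mul tu).mul tu).div_const 6)).sub
      ((tu.mul (tq.mul tq)).div_const 2)
    norm_num at h
    exact h.congr fun x => by rw [hw_def]; ring
  have tz : Filter.Tendsto z Filter.atTop (nhds 0) := by
    have h := ((((((txq.mul tq).neg.div_const 2).sub (tu.div_const 2)).sub
      ((tu.mul tq).mul tp)).sub
      (((tq.mul tq).mul (tq.mul tq)).const_mul 3|>.div_const 8)).add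
      ((((tu.mul tu).mul (tu.mul tu))).div_const 8)).sub
      ((((tu.mul tu).mul (tq.mul tq)).const_mul 3).div_const 4)
    norm_num at h
    exact h.congr fun x => by rw [hz_def]; ring
  -- the closed forms of the integrals
  have hu00e : ∀ s : ℝ, u00 s = u s := fun s => by
    rw [hu00 s]; exact ftc_aux hud tu (int1 s)
  have hq1e : ∀ x : ℝ, q1 x = q1c x := fun x => by
    rw [hq1 x, hu00e x, hq1c_def]
  have hu10e : ∀ s : ℝ, u10 s = v s := fun s => by
    rw [hu10 s]
    simp only [hq1e]
    exact ftc_aux hvd tv (int2 s)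
  have hq2e : ∀ x : ℝ, q2 x = q2c x := fun x => by
    rw [hq2 x, hu10e x, hu00e x, hq1e x, hq2c_def]
  have hu20e : ∀ s : ℝ, u20 s = w s := fun s => by
    rw [hu20 s]
    simp only [hq2e]
    exact ftc_aux hwd tw (int3 s)
  have hu21e : ∀ s : ℝ, u21 s = z s := fun s => by
    rw [hu21 s]
    simp only [hq2e, hq1e]
    exact ftc_aux hzd tz (int4 s)
  -- representation of F via u
  obtain ⟨hKd, hKlim⟩ := K_aux hu_c int5
  have hIK : ∀ s : ℝ, (∫ x in Set.Ioi s, (x - s) * q x ^ 2) = ∫ x in Set.Ioi s, u x := by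
    intro s
    have hg : ∀ x : ℝ, HasDerivAt (fun y => (y - s) * u y + ∫ t in Set.Ioi y, u t)
        (-((x - s) * q x ^ 2)) x := by
      intro x
      have h := (((hasDerivAt_id x).sub_const s).mul (hud x)).add (hKd x)
      refine h.congr_deriv ?_
      simp only [id_eq]
      ring
    have hlim : Filter.Tendsto (fun y => (y - s) * u y + ∫ t in Set.Ioi y, u t)
        Filter.atTop (nhds 0) := by
      have h := (txu.sub (tu.const_mul s)).add hKlim
      norm_num at h
      exact h.congr fun x => by ring
    have hres := ftc_aux hg hlim (int6 s)
    rw [hres]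
    simp
  have hFe : ∀ t : ℝ, F t = Real.exp (-(∫ x in Set.Ioi t, u x)) := fun t => by
    rw [hF t, hIK t]
  have hFd : ∀ s : ℝ, HasDerivAt F (u s * F s) s := by
    intro s
    have h1 : HasDerivAt (fun t => Real.exp (-(∫ x in Set.Ioi t, u x)))
        (Real.exp (-(∫ x in Set.Ioi s, u x)) * u s) s := by
      have h := ((hKd s).neg).exp
      refine h.congr_deriv ?_
      simp only [Pi.neg_apply, neg_neg]
    have h2 := h1.congr_of_eventuallyEq (Filter.Eventually.of_forall hFe)
    rw [hFe s, mul_comm]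
    exact h2
  -- the chain of derivatives of F
  obtain ⟨G2, hG2_def⟩ : ∃ t : ℝ → ℝ, t = fun x => u x ^ 2 - q x ^ 2 := ⟨_, rfl⟩
  obtain ⟨G3, hG3_def⟩ : ∃ t : ℝ → ℝ, t = fun x =>
    u x ^ 3 - 3 * (u x * q x ^ 2) - 2 * (q x * p x) := ⟨_, rfl⟩
  obtain ⟨G4, hG4_def⟩ : ∃ t : ℝ → ℝ, t = fun x => u x ^ 4 - 6 * (u x ^ 2 * q x ^ 2)
    - 8 * (u x * q x * p x) - 2 * p x ^ 2 - 2 * (x * q x ^ 2) - q x ^ 4 := ⟨_, rfl⟩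
  obtain ⟨G5, hG5_def⟩ : ∃ t : ℝ → ℝ, t = fun x => u x ^ 5 - 10 * (u x ^ 3 * q x ^ 2)
    - 20 * (u x ^ 2 * q x * p x) - 10 * (u x * p x ^ 2) - 10 * (x * u x * q x ^ 2)
    - 5 * (u x * q x ^ 4) - 8 * (x * q x * p x) - 4 * (q x ^ 3 * p x)
    - 2 * q x ^ 2 := ⟨_, rfl⟩
  have hFd1 : ∀ s : ℝ, HasDerivAt (fun t => u t * F t) (G2 s * F s) s := by
    intro s
    have h := (hud s).mul (hFd s)
    refine h.congr_deriv ?_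
    rw [hG2_def]; ring
  have hFd2 : ∀ s : ℝ, HasDerivAt (fun t => G2 t * F t) (G3 s * F s) s := by
    intro s
    rw [hG2_def, hG3_def]
    have h := (((hud s).pow 2).sub ((hqd s).pow 2)).mul (hFd s)
    refine h.congr_deriv ?_
    simp only [Pi.pow_apply, Pi.sub_apply, Pi.mul_apply, Pi.add_apply, Pi.neg_apply]
    ring
  have hFd3 : ∀ s : ℝ, HasDerivAt (fun t => G3 t * F t) (G4 s * F s) s := by
    intro s
    rw [hG3_def, hG4_def]
    have h := ((((hud s).pow 3).sub
      (((hud s).mul ((hqd s).pow 2)).const_mul 3)).sub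
      (((hqd s).mul (hpd s)).const_mul 2)).mul (hFd s)
    refine h.congr_deriv ?_
    simp only [Pi.pow_apply, Pi.sub_apply, Pi.mul_apply, Pi.add_apply, Pi.neg_apply]
    ring
  have hFd4 : ∀ s : ℝ, HasDerivAt (fun t => G4 t * F t) (G5 s * F s) s := by
    intro s
    rw [hG4_def, hG5_def]
    have h1 := ((hud s).pow 4).sub
      ((((hud s).pow 2).mul ((hqd s).pow 2)).const_mul 6)
    have h2 := h1.sub ((((hud s).mul (hqd s)).mul (hpd s)).const_mul 8)
    have h3 := h2.sub (((hpd s).pow 2).const_mul 2)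
    have h4 := h3.sub (((hasDerivAt_id s).mul ((hqd s).pow 2)).const_mul 2)
    have h5 := h4.sub ((hqd s).pow 4)
    have h := h5.mul (hFd s)
    refine h.congr_deriv ?_
    simp only [Pi.pow_apply, Pi.sub_apply, Pi.mul_apply, Pi.add_apply, Pi.neg_apply, id_eq]
    ring
  -- iterated derivatives of F
  have e0 : deriv F = fun t => u t * F t := funext fun t => (hFd t).deriv
  have e1 : deriv (fun t => u t * F t) = fun t => G2 t * F t :=
    funext fun t => (hFd1 t).deriv
  have e2 : deriv (fun t => G2 t * F t) = fun t => G3 t * F t :=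
    funext fun t => (hFd2 t).deriv
  have e3 : deriv (fun t => G3 t * F t) = fun t => G4 t * F t :=
    funext fun t => (hFd3 t).deriv
  have e4 : deriv (fun t => G4 t * F t) = fun t => G5 t * F t :=
    funext fun t => (hFd4 t).deriv
  have i2 : iteratedDeriv 2 F = fun t => G2 t * F t := by
    rw [show (2:ℕ) = 1 + 1 from rfl, iteratedDeriv_succ, iteratedDeriv_one, e0, e1]
  have i3 : iteratedDeriv 3 F = fun t => G3 t * F t := by
    rw [show (3:ℕ) = 2 + 1 from rfl, iteratedDeriv_succ, i2, e2]
  have i5 : iteratedDeriv 5 F = fun t => G5 t * F t := by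
    rw [show (5:ℕ) = 4 + 1 from rfl, iteratedDeriv_succ,
      show (4:ℕ) = 3 + 1 from rfl, iteratedDeriv_succ, i3, e3, e4]
  -- the final polynomial identity
  intro s
  rw [i2, i3, i5, hu10e, hu20e, hu00e, hu21e]
  simp only [hG2_def, hG3_def, hG5_def, hv_def, hw_def, hz_def, hu_def]
  ring
end

section
/- Let f : ℝ → ℝ be a Schwartz function with ∫_ℝ f(s) ds = 1, and set μ_k := ∫_ℝ s^k·f(s) ds. Then ∬_{ℝ²} [ (1/3)·(3s₁ + s₂)·(3s₂ + s₁)·f(s₁)·f(s₂) + 3·(f'(s₁)·f(s₂) + f(s₁)·f'(s₂)) + (s₁ + s₂)·f'(s₁)·f'(s₂) + (1/6)·f''(s₁)·f''(s₂) ] ds₁ ds₂ = 2·μ₂ + (10/3)·μ₁². -/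
open MeasureTheory Filter SchwartzMap intervalIntegral

/-- For a real Schwartz function, the integral of its derivative vanishes. -/
lemma schwartz_integral_deriv_eq_zero (g : SchwartzMap ℝ ℝ) :
    (∫ x : ℝ, deriv g x) = 0 := by
  have hint : Integrable (fun x : ℝ => deriv g x) := by
    have h := (SchwartzMap.derivCLM ℝ ℝ g).integrable (μ := volume)
    have he : ⇑(SchwartzMap.derivCLM ℝ ℝ g) = fun x : ℝ => deriv g x :=
      funext fun x => SchwartzMap.derivCLM_apply ℝ g x
    rwa [he] at h
  have h1 : Tendsto (fun R : ℝ => ∫ x in (-R)..R, deriv g x) atTop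
      (nhds (∫ x : ℝ, deriv g x)) :=
    intervalIntegral_tendsto_integral hint tendsto_neg_atTop_atBot tendsto_id
  have h2 : ∀ R : ℝ, (∫ x in (-R)..R, deriv g x) = g R - g (-R) := fun R =>
    integral_deriv_eq_sub (fun x _ => g.differentiableAt) hint.intervalIntegrable
  have hc : Tendsto g (Filter.cocompact ℝ) (nhds 0) := zero_at_infty g
  have hTop : Tendsto g atTop (nhds 0) :=
    hc.mono_left (by rw [cocompact_eq_atBot_atTop]; exact le_sup_right)
  have hBot : Tendsto g atBot (nhds 0) :=
    hc.mono_left (by rw [cocompact_eq_atBot_atTop]; exact le_sup_left)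
  have h3 : Tendsto (fun R : ℝ => g R - g (-R)) atTop (nhds (0 - 0)) :=
    hTop.sub (hBot.comp tendsto_neg_atTop_atBot)
  simp only [h2] at h1
  have := tendsto_nhds_unique h1 h3
  simpa using this

/-- `s ^ k * g s` is integrable for a Schwartz function `g`. -/
lemma schwartz_integrable_pow_mul (g : SchwartzMap ℝ ℝ) (k : ℕ) :
    Integrable (fun s : ℝ => s ^ k * g s) := by
  refine (g.integrable_pow_mul volume k).mono'
    (((continuous_id.pow k).mul g.continuous).aestronglyMeasurable) ?_
  filter_upwards with s
  simp [abs_mul, abs_pow]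

/-- The covariance coefficient `C₆ = 2μ₂ + (10/3)μ₁²`: for any Schwartz probability
density `f`, the double integral of the sixth-order coefficient `c₆` equals
`2μ₂ + (10/3)μ₁²`, where `μ_k = ∫ s^k f(s) ds`. -/
theorem C6_eq (f : SchwartzMap ℝ ℝ) (hf : (∫ s : ℝ, f s) = 1) :
    (∫ p : ℝ × ℝ,
        ((1 / 3) * (3 * p.1 + p.2) * (3 * p.2 + p.1) * f p.1 * f p.2 +
          3 * (deriv f p.1 * f p.2 + f p.1 * deriv f p.2) +
          (p.1 + p.2) * deriv f p.1 * deriv f p.2 +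
          (1 / 6) * iteratedDeriv 2 f p.1 * iteratedDeriv 2 f p.2)) =
      2 * (∫ s : ℝ, s ^ 2 * f s) + (10 / 3) * (∫ s : ℝ, s * f s) ^ 2 := by
  set g : SchwartzMap ℝ ℝ := SchwartzMap.derivCLM ℝ ℝ f with hgdef
  have hg : (fun x : ℝ => deriv f x) = ⇑g :=
    funext fun x => (SchwartzMap.derivCLM_apply ℝ f x).symm
  set g2 : SchwartzMap ℝ ℝ := SchwartzMap.derivCLM ℝ ℝ g with hg2def
  have hg2 : (fun x : ℝ => iteratedDeriv 2 (⇑f) x) = ⇑g2 := by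
    funext x
    rw [show (2 : ℕ) = 1 + 1 from rfl, iteratedDeriv_succ, iteratedDeriv_one]
    rw [SchwartzMap.derivCLM_apply]
    exact congrFun (congrArg deriv hg) x
  -- one-dimensional integral values
  have hI0 : (∫ s : ℝ, f s) = 1 := hf
  have hIg : (∫ s : ℝ, g s) = 0 := by
    rw [← hg]; exact schwartz_integral_deriv_eq_zero f
  have hIg2 : (∫ s : ℝ, g2 s) = 0 := by
    have : (fun x : ℝ => deriv g x) = ⇑g2 :=
      funext fun x => (SchwartzMap.derivCLM_apply ℝ g x).symm
    rw [← this]; exact schwartz_integral_deriv_eq_zero g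
  -- integrability
  have if0 : Integrable (⇑f) volume := f.integrable
  have if1 : Integrable (fun s : ℝ => s * f s) volume := by
    simpa using schwartz_integrable_pow_mul f 1
  have if2 : Integrable (fun s : ℝ => s ^ 2 * f s) volume :=
    schwartz_integrable_pow_mul f 2
  have ig0 : Integrable (⇑g) volume := g.integrable
  have ig1 : Integrable (fun s : ℝ => s * g s) volume := by
    simpa using schwartz_integrable_pow_mul g 1
  have ig2 : Integrable (⇑g2) volume := g2.integrable
  -- product integral helper
  have prodmul : ∀ A B : ℝ → ℝ, (∫ p : ℝ × ℝ, A p.1 * B p.2) =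
      (∫ s : ℝ, A s) * (∫ s : ℝ, B s) := fun A B => by
    rw [MeasureTheory.Measure.volume_eq_prod]; exact integral_prod_mul A B
  have prodint : ∀ {A B : ℝ → ℝ}, Integrable A volume → Integrable B volume →
      Integrable (fun p : ℝ × ℝ => A p.1 * B p.2) volume := fun hA hB => by
    rw [MeasureTheory.Measure.volume_eq_prod]; exact hA.mul_prod hB
  have i1 := prodint if2 if0
  have i2 := prodint if0 if2
  have i3 := prodint (if1.const_mul (10 / 3 : ℝ)) if1
  have i4 := prodint (ig0.const_mul (3 : ℝ)) if0
  have i5 := prodint if0 (ig0.const_mul (3 : ℝ))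
  have i6 := prodint ig1 ig0
  have i7 := prodint ig0 ig1
  have i8 := prodint (ig2.const_mul (1 / 6 : ℝ)) ig2
  have expand : (fun p : ℝ × ℝ =>
      ((1 / 3) * (3 * p.1 + p.2) * (3 * p.2 + p.1) * f p.1 * f p.2 +
        3 * (deriv f p.1 * f p.2 + f p.1 * deriv f p.2) +
        (p.1 + p.2) * deriv f p.1 * deriv f p.2 +
        (1 / 6) * iteratedDeriv 2 f p.1 * iteratedDeriv 2 f p.2)) =
      fun p : ℝ × ℝ =>
        p.1 ^ 2 * f p.1 * f p.2 +
          (f p.1 * (p.2 ^ 2 * f p.2) +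
            (10 / 3 * (p.1 * f p.1) * (p.2 * f p.2) +
              (3 * g p.1 * f p.2 +
                (f p.1 * (3 * g p.2) +
                  (p.1 * g p.1 * g p.2 +
                    (g p.1 * (p.2 * g p.2) + 1 / 6 * g2 p.1 * g2 p.2)))))) := by
    funext p
    have e1 : deriv f p.1 = g p.1 := congrFun hg p.1
    have e2 : deriv f p.2 = g p.2 := congrFun hg p.2
    have e3 : iteratedDeriv 2 (⇑f) p.1 = g2 p.1 := congrFun hg2 p.1
    have e4 : iteratedDeriv 2 (⇑f) p.2 = g2 p.2 := congrFun hg2 p.2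
    rw [e1, e2, e3, e4]
    ring
  have r7 : Integrable (fun p : ℝ × ℝ =>
      g p.1 * (p.2 * g p.2) + 1 / 6 * g2 p.1 * g2 p.2) volume := i7.add i8
  have r6 : Integrable (fun p : ℝ × ℝ =>
      p.1 * g p.1 * g p.2 + (g p.1 * (p.2 * g p.2) + 1 / 6 * g2 p.1 * g2 p.2)) volume :=
    i6.add r7
  have r5 : Integrable (fun p : ℝ × ℝ =>
      f p.1 * (3 * g p.2) + (p.1 * g p.1 * g p.2 +
        (g p.1 * (p.2 * g p.2) + 1 / 6 * g2 p.1 * g2 p.2))) volume := i5.add r6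
  have r4 : Integrable (fun p : ℝ × ℝ =>
      3 * g p.1 * f p.2 + (f p.1 * (3 * g p.2) + (p.1 * g p.1 * g p.2 +
        (g p.1 * (p.2 * g p.2) + 1 / 6 * g2 p.1 * g2 p.2)))) volume := i4.add r5
  have r3 : Integrable (fun p : ℝ × ℝ =>
      10 / 3 * (p.1 * f p.1) * (p.2 * f p.2) + (3 * g p.1 * f p.2 +
        (f p.1 * (3 * g p.2) + (p.1 * g p.1 * g p.2 +
          (g p.1 * (p.2 * g p.2) + 1 / 6 * g2 p.1 * g2 p.2))))) volume := i3.add r4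
  have r2 : Integrable (fun p : ℝ × ℝ =>
      f p.1 * (p.2 ^ 2 * f p.2) + (10 / 3 * (p.1 * f p.1) * (p.2 * f p.2) +
        (3 * g p.1 * f p.2 + (f p.1 * (3 * g p.2) + (p.1 * g p.1 * g p.2 +
          (g p.1 * (p.2 * g p.2) + 1 / 6 * g2 p.1 * g2 p.2)))))) volume := i2.add r3
  rw [expand]
  rw [integral_add i1 r2, integral_add i2 r3, integral_add i3 r4, integral_add i4 r5,
    integral_add i5 r6, integral_add i6 r7, integral_add i7 i8]
  rw [prodmul (fun s => s ^ 2 * f s) (⇑f), prodmul (⇑f) (fun s => s ^ 2 * f s),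
    prodmul (fun s => 10 / 3 * (s * f s)) (fun s => s * f s),
    prodmul (fun s => 3 * g s) (⇑f), prodmul (⇑f) (fun s => 3 * g s),
    prodmul (fun s => s * g s) (⇑g), prodmul (⇑g) (fun s => s * g s),
    prodmul (fun s => 1 / 6 * g2 s) (⇑g2)]
  rw [MeasureTheory.integral_const_mul, MeasureTheory.integral_const_mul,
    MeasureTheory.integral_const_mul]
  rw [hI0, hIg, hIg2]
  ring
end
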